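/- arXiv:1308.1524 — 6 statements merged into one kernel-verified Lean document; each statement's English description precedes it below -/
import Mathlib

section
/- Let m ≥ 1 and let P = (p_{ij})_{1≤i,j≤m} be a real m×m matrix with all entries p_{ij} > 0, row sums Σ_{j=1}^m p_{ij} ≤ 1 for every i, and Σ_{j=1}^m p_{i₀j} < 1 for at least one index i₀. Then there exists a constant c < 1 such that for every integer n ≥ m and every row vector x = (x₁,...,x_m) with x_i ≥ 0 for all i, one has ‖xP^n‖_{L¹} ≤ c‖x‖_{L¹}, where ‖x‖_{L¹} = Σ_{i=1}^m |x_i|. -/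
/-- For an `m × m` matrix `P` with strictly positive entries, row sums at most `1`,
and at least one row sum strictly less than `1`, there is a constant `c < 1` such that for every
`n ≥ m` and every nonnegative row vector `x` one has `‖x Pⁿ‖_{L¹} ≤ c ‖x‖_{L¹}`. -/
theorem generalized_jackson_contraction
    (m : ℕ) (hm : 1 ≤ m) (P : Matrix (Fin m) (Fin m) ℝ)
    (hpos : ∀ i j, 0 < P i j)
    (hrow : ∀ i, ∑ j, P i j ≤ 1)
    (hexit : ∃ i₀, ∑ j, P i₀ j < 1) :
    ∃ c : ℝ, c < 1 ∧
      ∀ n : ℕ, m ≤ n → ∀ x : Fin m → ℝ, (∀ i, 0 ≤ x i) →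
        ∑ j, |Matrix.vecMul x (P ^ n) j| ≤ c * ∑ i, |x i| := by
  classical
  have hne : Nonempty (Fin m) := ⟨⟨0, hm⟩⟩
  set r : ℕ → Fin m → ℝ := fun n i => ∑ j, (P ^ n) i j with hrdef
  have hPn : ∀ n i j, 0 ≤ (P ^ n) i j := by
    intro n
    induction n with
    | zero =>
      intro i j
      rw [pow_zero]
      by_cases h : i = j <;> simp [Matrix.one_apply, h]
    | succ n ih =>
      intro i j
      rw [pow_succ, Matrix.mul_apply]
      exact Finset.sum_nonneg fun k _ => mul_nonneg (ih i k) (hpos k j).le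
  have hr1 : ∀ i, r 1 i = ∑ j, P i j := by
    intro i; simp [hrdef]
  have hrec : ∀ n i, r (n + 1) i = ∑ k, P i k * r n k := by
    intro n i
    simp only [hrdef, pow_succ', Matrix.mul_apply]
    rw [Finset.sum_comm]
    simp [Finset.mul_sum]
  have hr0 : ∀ i, r 0 i = 1 := by
    intro i; simp [hrdef, Matrix.one_apply]
  have hrle1 : ∀ n i, r n i ≤ 1 := by
    intro n
    induction n with
    | zero => intro i; rw [hr0]
    | succ n ih =>
      intro i
      rw [hrec]
      calc ∑ k, P i k * r n k ≤ ∑ k, P i k := by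
            refine Finset.sum_le_sum fun k _ => ?_
            exact mul_le_of_le_one_right (hpos i k).le (ih k)
        _ ≤ 1 := hrow i
  have hmono : ∀ n i, r (n + 1) i ≤ r n i := by
    intro n
    induction n with
    | zero =>
      intro i
      rw [hr0]
      exact hrle1 1 i
    | succ n ih =>
      intro i
      rw [hrec, hrec]
      exact Finset.sum_le_sum fun k _ => mul_le_mul_of_nonneg_left (ih k) (hpos i k).le
  have hanti : ∀ a b : ℕ, a ≤ b → ∀ i, r b i ≤ r a i := by
    intro a b hab
    induction b, hab using Nat.le_induction with
    | base => intro i; exact le_rfl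
    | succ b hab ih => intro i; exact (hmono b i).trans (ih i)
  obtain ⟨i₀, hi₀⟩ := hexit
  have hrm : ∀ i, r m i < 1 := by
    rcases Nat.lt_or_ge m 2 with h2 | h2
    · -- m = 1
      have hm1 : m = 1 := le_antisymm (Nat.lt_succ_iff.mp h2) hm
      intro i
      have : i = i₀ := by subst hm1; exact Subsingleton.elim i i₀
      subst this
      have := hr1 i
      calc r m i = r 1 i := by rw [hm1]
        _ < 1 := by rw [hr1]; exact hi₀
    · -- m ≥ 2 : row sums of P^2 are all < 1
      have h2lt : ∀ i, r 2 i < 1 := by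
        intro i
        rw [show (2 : ℕ) = 1 + 1 from rfl, hrec]
        have hlt : ∑ k, P i k * r 1 k < ∑ k, P i k := by
          refine Finset.sum_lt_sum (fun k _ => ?_) ⟨i₀, Finset.mem_univ i₀, ?_⟩
          · exact mul_le_of_le_one_right (hpos i k).le (hrle1 1 k)
          · have : r 1 i₀ < 1 := by rw [hr1]; exact hi₀
            exact mul_lt_of_lt_one_right (hpos i i₀) this
        exact hlt.trans_le (hrow i)
      intro i
      exact (hanti 2 m h2 i).trans_lt (h2lt i)
  have huniv : (Finset.univ : Finset (Fin m)).Nonempty := Finset.univ_nonempty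
  refine ⟨Finset.univ.sup' huniv (r m), ?_, ?_⟩
  · rw [Finset.sup'_lt_iff]
    intro i _
    exact hrm i
  · intro n hn x hx
    set c := Finset.univ.sup' huniv (r m) with hcdef
    have hvm : ∀ j, Matrix.vecMul x (P ^ n) j = ∑ i, x i * (P ^ n) i j := by
      intro j; simp [Matrix.vecMul, dotProduct]
    have habs : ∀ j, |Matrix.vecMul x (P ^ n) j| = ∑ i, x i * (P ^ n) i j := by
      intro j
      rw [hvm j, abs_of_nonneg]
      exact Finset.sum_nonneg fun i _ => mul_nonneg (hx i) (hPn n i j)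
    calc ∑ j, |Matrix.vecMul x (P ^ n) j|
        = ∑ j, ∑ i, x i * (P ^ n) i j := by
          exact Finset.sum_congr rfl fun j _ => habs j
      _ = ∑ i, x i * r n i := by
          rw [Finset.sum_comm]
          exact Finset.sum_congr rfl fun i _ => by rw [hrdef, Finset.mul_sum]
      _ ≤ ∑ i, x i * c := by
          refine Finset.sum_le_sum fun i _ => ?_
          refine mul_le_mul_of_nonneg_left ?_ (hx i)
          exact (hanti m n hn i).trans (Finset.le_sup' (r m) (Finset.mem_univ i))
      _ = c * ∑ i, |x i| := by
          rw [Finset.mul_sum]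
          exact Finset.sum_congr rfl fun i _ => by rw [abs_of_nonneg (hx i), mul_comm]
end

section
/- Let P = (p_{ij})_{i,j∈ℕ} be a double semi-stochastic matrix, i.e. p_{ij} ≥ 0, Σ_j p_{ij} ≤ 1 for every i, and Σ_i p_{ij} ≤ 1 for every j, and let λ*(j) = lim_{n→∞} Σ_i (P^n)_{ij} (this limit exists since the column sums of P^n are non-increasing in n). Then λ* is an invariant measure for P: for every j, λ*(j) = Σ_i λ*(i) p_{ij}. -/
set_option maxHeartbeats 1000000
open Filter Topology ENNReal

/-- The `n`-th power of a countably-indexed nonnegative matrix: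
`(P^0)_{ij} = δ_{ij}` and `(P^{n+1})_{ij} = ∑_k (P^n)_{ik} p_{kj}`. -/
noncomputable def matPow (P : ℕ → ℕ → ℝ≥0∞) : ℕ → ℕ → ℕ → ℝ≥0∞
  | 0 => fun i j => if i = j then 1 else 0
  | n + 1 => fun i j => ∑' k, matPow P n i k * P k j

/-- Column sums of `matPow`. -/
noncomputable def colSum (P : ℕ → ℕ → ℝ≥0∞) (n k : ℕ) : ℝ≥0∞ :=
  ∑' i, matPow P n i k

lemma colSum_zero (P : ℕ → ℕ → ℝ≥0∞) (k : ℕ) : colSum P 0 k = 1 := by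
  simp [colSum, matPow, tsum_ite_eq]

lemma colSum_succ (P : ℕ → ℕ → ℝ≥0∞) (n j : ℕ) :
    colSum P (n + 1) j = ∑' k, colSum P n k * P k j := by
  have h : colSum P (n + 1) j = ∑' i, ∑' k, matPow P n i k * P k j := rfl
  rw [h, ENNReal.tsum_comm]
  exact tsum_congr fun k => ENNReal.tsum_mul_right

lemma colSum_le_one (P : ℕ → ℕ → ℝ≥0∞) (hcol : ∀ j, ∑' i, P i j ≤ 1) :
    ∀ n k, colSum P n k ≤ 1 := by
  intro n
  induction n with
  | zero => intro k; simp [colSum_zero]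
  | succ n ih =>
    intro k
    rw [colSum_succ]
    calc ∑' m, colSum P n m * P m k ≤ ∑' m, 1 * P m k :=
          ENNReal.tsum_le_tsum fun m => mul_le_mul_left (ih m) _
      _ = ∑' m, P m k := by simp
      _ ≤ 1 := hcol k

lemma colSum_antitone (P : ℕ → ℕ → ℝ≥0∞) (hcol : ∀ j, ∑' i, P i j ≤ 1) (k : ℕ) :
    Antitone fun n => colSum P n k := by
  have h : ∀ n k, colSum P (n + 1) k ≤ colSum P n k := by
    intro n
    induction n with
    | zero =>
      intro k
      rw [colSum_succ]
      calc ∑' m, colSum P 0 m * P m k = ∑' m, P m k := by simp [colSum_zero]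
        _ ≤ 1 := hcol k
        _ = colSum P 0 k := (colSum_zero P k).symm
    | succ n ih =>
      intro k
      rw [colSum_succ, colSum_succ]
      exact ENNReal.tsum_le_tsum fun m => mul_le_mul_left (ih m) _
  exact antitone_nat_of_succ_le fun n => h n k

/-- For a double semi-stochastic matrix `P`, the limit
`λ*(j) = lim_n ∑_i (Pⁿ)_{ij}` defines an invariant measure: `λ*(j) = ∑_i λ*(i) p_{ij}`. -/
theorem lambdaStar_invariant
    (P : ℕ → ℕ → ℝ≥0∞)
    (hrow : ∀ i, ∑' j, P i j ≤ 1)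
    (hcol : ∀ j, ∑' i, P i j ≤ 1)
    (lamStar : ℕ → ℝ≥0∞)
    (hlim : ∀ j, Tendsto (fun n => ∑' i, matPow P n i j) atTop (𝓝 (lamStar j))) :
    ∀ j, lamStar j = ∑' i, lamStar i * P i j := by
  have hlimc : ∀ j, Tendsto (fun n => colSum P n j) atTop (𝓝 (lamStar j)) := hlim
  have hle1 := colSum_le_one P hcol
  -- lamStar ≤ colSum n
  have hlam_le : ∀ n k, lamStar k ≤ colSum P n k := by
    intro n k
    refine le_of_tendsto (hlimc k) ?_
    filter_upwards [eventually_ge_atTop n] with m hm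
    exact colSum_antitone P hcol k hm
  have hPtop : ∀ k j, P k j ≠ ⊤ := fun k j =>
    ne_top_of_le_ne_top one_ne_top ((ENNReal.le_tsum k).trans (hcol j))
  intro j
  have hlim' : Tendsto (fun n => colSum P (n + 1) j) atTop (𝓝 (lamStar j)) :=
    (hlimc j).comp (tendsto_add_atTop_nat 1)
  have h1 : ∑' k, lamStar k * P k j ≤ lamStar j := by
    refine ge_of_tendsto hlim' (Eventually.of_forall fun n => ?_)
    rw [colSum_succ]
    exact ENNReal.tsum_le_tsum fun k => mul_le_mul_left (hlam_le n k) _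
  have h2 : lamStar j ≤ ∑' k, lamStar k * P k j := by
    refine ENNReal.le_of_forall_pos_le_add fun ε hε _ => ?_
    have htail : Tendsto (fun s : Finset ℕ => ∑' k : {x // x ∉ s}, P k j) atTop (𝓝 0) :=
      ENNReal.tendsto_tsum_compl_atTop_zero
        (ne_top_of_le_ne_top one_ne_top (hcol j))
    have hεpos : (0 : ℝ≥0∞) < ε := ENNReal.coe_pos.2 hε
    obtain ⟨F, hF⟩ := (htail.eventually (eventually_lt_nhds hεpos)).exists
    have hbound : ∀ n, colSum P (n + 1) j ≤ (∑ k ∈ F, colSum P n k * P k j) + ε := by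
      intro n
      rw [colSum_succ]
      have hsplit : ∑' k, colSum P n k * P k j
          = (∑ k ∈ F, colSum P n k * P k j) + ∑' k : {x // x ∉ F}, colSum P n k * P k j := by
        rw [← Summable.tsum_add_tsum_compl (f := fun k => colSum P n k * P k j) (s := (F : Set ℕ)) ENNReal.summable ENNReal.summable]
        congr 1
        exact Finset.tsum_subtype F (fun k => colSum P n k * P k j)
      rw [hsplit]
      refine add_le_add_right ?_ _
      calc ∑' k : {x // x ∉ F}, colSum P n (k : ℕ) * P k j
          ≤ ∑' k : {x // x ∉ F}, 1 * P (k : ℕ) j :=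
            ENNReal.tsum_le_tsum fun k => mul_le_mul_left (hle1 n k) _
        _ = ∑' k : {x // x ∉ F}, P (k : ℕ) j := by simp
        _ ≤ ε := hF.le
    have hfin : Tendsto (fun n => (∑ k ∈ F, colSum P n k * P k j) + ε) atTop
        (𝓝 ((∑ k ∈ F, lamStar k * P k j) + ε)) := by
      refine Tendsto.add_const _ ?_
      exact tendsto_finset_sum _ fun k _ =>
        ENNReal.Tendsto.mul_const (hlimc k) (Or.inr (hPtop k j))
    refine (le_of_tendsto_of_tendsto' hlim' hfin hbound).trans
      (add_le_add_left (ENNReal.sum_le_tsum F) _)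
  exact le_antisymm h2 h1
end

section
/- (Kelbert–Kontsevich–Rybko) Let P = (p_{ij})_{i,j∈ℕ} be an irreducible double semi-stochastic matrix, i.e. p_{ij} ≥ 0, Σ_j p_{ij} ≤ 1 for every i, Σ_i p_{ij} ≤ 1 for every j, and for every pair i, j there exists n with (P^n)_{ij} > 0. Let λ*(j) = lim_{n→∞} Σ_i (P^n)_{ij}. Then the following two properties are equivalent: (1) λ*(j) = 0 for every j; (2) the zero measure is the only nonnegative invariant L∞-measure of P, i.e. the only bounded nonnegative function λ on ℕ satisfying λ(j) = Σ_i λ(i) p_{ij} for all j is λ ≡ 0. -/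
open Filter Topology ENNReal

/-- Kelbert–Kontsevich–Rybko: For an irreducible double semi-stochastic matrix `P`,
the invariant measure `λ*(j) = lim_n ∑_i (Pⁿ)_{ij}` vanishes identically if and only if the zero
measure is the only nonnegative invariant `L∞`-measure of `P`. -/
theorem KKR_theorem
    (P : ℕ → ℕ → ℝ≥0∞)
    (hrow : ∀ i, ∑' j, P i j ≤ 1)
    (hcol : ∀ j, ∑' i, P i j ≤ 1)
    (hirr : ∀ i j, ∃ n, 0 < matPow P n i j)
    (lamStar : ℕ → ℝ≥0∞)
    (hlim : ∀ j, Tendsto (fun n => ∑' i, matPow P n i j) atTop (𝓝 (lamStar j))) :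
    (∀ j, lamStar j = 0) ↔
      (∀ lam : ℕ → ℝ≥0∞, (∃ C : ℝ≥0∞, C ≠ ⊤ ∧ ∀ i, lam i ≤ C) →
        (∀ j, lam j = ∑' i, lam i * P i j) → ∀ j, lam j = 0) := by
  classical
  -- column sums of powers
  set c : ℕ → ℕ → ℝ≥0∞ := fun n j => ∑' i, matPow P n i j with hc
  have hc0 : ∀ j, c 0 j = 1 := by
    intro j
    simp only [hc, matPow]
    exact tsum_ite_eq j 1
  have hcrec : ∀ n j, c (n + 1) j = ∑' k, c n k * P k j := by
    intro n j
    simp only [hc, matPow]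
    rw [ENNReal.tsum_comm]
    exact tsum_congr fun k => (ENNReal.tsum_mul_right).symm ▸ rfl
  have hcle1 : ∀ n j, c n j ≤ 1 := by
    intro n
    induction n with
    | zero => intro j; rw [hc0]
    | succ n ih =>
      intro j
      rw [hcrec]
      calc ∑' k, c n k * P k j ≤ ∑' k, 1 * P k j :=
            ENNReal.tsum_le_tsum fun k => mul_le_mul_left (ih k) _
        _ = ∑' k, P k j := by simp
        _ ≤ 1 := hcol j
  have hstar_le : ∀ j, lamStar j ≤ 1 := fun j =>
    le_of_tendsto (hlim j) (Eventually.of_forall fun n => hcle1 n j)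
  -- invariance of lamStar via dominated convergence (counting measure)
  have hinv : ∀ j, lamStar j = ∑' k, lamStar k * P k j := by
    intro j
    have hdom : Tendsto (fun n => ∑' k, c n k * P k j) atTop
        (𝓝 (∑' k, lamStar k * P k j)) := by
      have := MeasureTheory.tendsto_lintegral_of_dominated_convergence
        (μ := MeasureTheory.Measure.count (α := ℕ))
        (F := fun n k => c n k * P k j) (f := fun k => lamStar k * P k j)
        (fun k => P k j)
        (fun n => measurable_from_nat)
        (fun n => Eventually.of_forall fun k => by
          calc c n k * P k j ≤ 1 * P k j := mul_le_mul_left (hcle1 n k) _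
            _ = P k j := one_mul _)
        (by rw [MeasureTheory.lintegral_count]; exact ne_top_of_le_ne_top one_ne_top (hcol j))
        (Eventually.of_forall fun k => by
          exact ENNReal.Tendsto.mul_const (hlim k)
            (Or.inr (ne_top_of_le_ne_top one_ne_top ((ENNReal.le_tsum k).trans (hcol j)))))
      simpa only [MeasureTheory.lintegral_count] using this
    have h1 : Tendsto (fun n => c (n + 1) j) atTop (𝓝 (lamStar j)) :=
      (hlim j).comp (tendsto_add_atTop_nat 1)
    have h2 : (fun n => c (n + 1) j) = fun n => ∑' k, c n k * P k j :=
      funext fun n => hcrec n j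
    exact tendsto_nhds_unique (h2 ▸ h1) hdom
  constructor
  · -- lamStar ≡ 0 ⇒ uniqueness
    intro h0 lam hbdd hinvlam j
    obtain ⟨C, hC, hCle⟩ := hbdd
    have hpow : ∀ n j, lam j = ∑' i, lam i * matPow P n i j := by
      intro n
      induction n with
      | zero =>
        intro j
        simp only [matPow]
        rw [tsum_eq_single j (fun i hi => by simp [hi])]
        simp
      | succ n ih =>
        intro j
        simp only [matPow]
        calc lam j = ∑' k, lam k * P k j := hinvlam j
          _ = ∑' k, (∑' i, lam i * matPow P n i k) * P k j := by
              exact tsum_congr fun k => by rw [← ih k]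
          _ = ∑' k, ∑' i, lam i * matPow P n i k * P k j := by
              exact tsum_congr fun k => (ENNReal.tsum_mul_right).symm
          _ = ∑' i, ∑' k, lam i * matPow P n i k * P k j := ENNReal.tsum_comm
          _ = ∑' i, lam i * ∑' k, matPow P n i k * P k j := by
              exact tsum_congr fun i => by
                rw [← ENNReal.tsum_mul_left]; exact tsum_congr fun k => (mul_assoc _ _ _)
    have hle : ∀ n, lam j ≤ C * c n j := by
      intro n
      calc lam j = ∑' i, lam i * matPow P n i j := hpow n j
        _ ≤ ∑' i, C * matPow P n i j :=
            ENNReal.tsum_le_tsum fun i => mul_le_mul_left (hCle i) _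
        _ = C * c n j := ENNReal.tsum_mul_left
    have htend : Tendsto (fun n => C * c n j) atTop (𝓝 0) := by
      have := ENNReal.Tendsto.const_mul (b := lamStar j) (a := C) (hlim j) (Or.inr hC)
      rwa [h0 j, mul_zero] at this
    exact le_antisymm (ge_of_tendsto htend (Eventually.of_forall hle)) zero_le
  · -- uniqueness ⇒ lamStar ≡ 0
    intro huniq
    exact huniq lamStar ⟨1, one_ne_top, hstar_le⟩ hinv
end

section
/- Let P = (p_{ij})_{i,j∈ℕ} be a stochastic matrix (p_{ij} ≥ 0 and Σ_j p_{ij} = 1 for every i). Suppose there is n₀ such that for every n ≥ n₀ and every j the column sum ‖γ_j^{(n)}‖_{L¹} = Σ_i (P^n)_{ij} is finite, and suppose that the limits λ*(j) = lim_{n→∞} Σ_i (P^n)_{ij} exist for every j. If λ*(j) = 0 for all j, then for every nonnegative L∞-measure k (i.e. k(i) ≥ 0 with sup_i k(i) < ∞) one has (kP^n)(j) = Σ_i k(i)(P^n)_{ij} → 0 as n → ∞ for every j; in particular the zero measure is the only nonnegative invariant L∞-measure of P. -/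
open Filter Topology ENNReal

lemma invariant_matPow (P : ℕ → ℕ → ℝ≥0∞) (lam : ℕ → ℝ≥0∞)
    (hinv : ∀ j, lam j = ∑' i, lam i * P i j) :
    ∀ n j, lam j = ∑' i, lam i * matPow P n i j := by
  intro n
  induction n with
  | zero =>
    intro j
    rw [show (∑' i, lam i * matPow P 0 i j) = lam j from ?_]
    rw [tsum_eq_single j (fun i hij => by simp [matPow, hij])]
    simp [matPow]
  | succ n ih =>
    intro j
    have h1 : (∑' i, lam i * matPow P (n+1) i j)
        = ∑' k, (∑' i, lam i * matPow P n i k) * P k j := by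
      simp only [matPow]
      calc (∑' i, lam i * ∑' k, matPow P n i k * P k j)
          = ∑' i, ∑' k, lam i * matPow P n i k * P k j := by
            congr 1; funext i
            rw [← ENNReal.tsum_mul_left]
            congr 1; funext k; ring
        _ = ∑' k, ∑' i, lam i * matPow P n i k * P k j := ENNReal.tsum_comm
        _ = ∑' k, (∑' i, lam i * matPow P n i k) * P k j := by
            congr 1; funext k
            rw [← ENNReal.tsum_mul_right]
    rw [h1]
    calc lam j = ∑' k, lam k * P k j := hinv j
      _ = ∑' k, (∑' i, lam i * matPow P n i k) * P k j := by
          congr 1; funext k; rw [← ih k]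

/-- Theorem T04: Let `P` be a stochastic matrix whose powers have finite column
sums for `n ≥ n₀`, and suppose the limits `λ*(j) = lim_n ∑_i (Pⁿ)_{ij}` exist. If `λ* ≡ 0`, then
for every nonnegative `L∞`-measure `k` one has `(kPⁿ)(j) → 0` for every `j`; in particular the
zero measure is the only nonnegative invariant `L∞`-measure of `P`. -/
theorem stochastic_summable_columns_convergence
    (P : ℕ → ℕ → ℝ≥0∞)
    (hstoch : ∀ i, ∑' j, P i j = 1)
    (n₀ : ℕ)
    (hfin : ∀ n, n₀ ≤ n → ∀ j, ∑' i, matPow P n i j ≠ ⊤)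
    (lamStar : ℕ → ℝ≥0∞)
    (hlim : ∀ j, Tendsto (fun n => ∑' i, matPow P n i j) atTop (𝓝 (lamStar j)))
    (hzero : ∀ j, lamStar j = 0) :
    (∀ k : ℕ → ℝ≥0∞, (∃ C : ℝ≥0∞, C ≠ ⊤ ∧ ∀ i, k i ≤ C) →
      ∀ j, Tendsto (fun n => ∑' i, k i * matPow P n i j) atTop (𝓝 0)) ∧
    (∀ lam : ℕ → ℝ≥0∞, (∃ C : ℝ≥0∞, C ≠ ⊤ ∧ ∀ i, lam i ≤ C) →
      (∀ j, lam j = ∑' i, lam i * P i j) → ∀ j, lam j = 0) := by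
  have key : ∀ (k : ℕ → ℝ≥0∞), (∃ C : ℝ≥0∞, C ≠ ⊤ ∧ ∀ i, k i ≤ C) →
      ∀ j, Tendsto (fun n => ∑' i, k i * matPow P n i j) atTop (𝓝 0) := by
    intro k ⟨C, hC, hk⟩ j
    have hS : Tendsto (fun n => C * ∑' i, matPow P n i j) atTop (𝓝 0) := by
      have h0 : Tendsto (fun n => ∑' i, matPow P n i j) atTop (𝓝 (0:ℝ≥0∞)) :=
        (hzero j) ▸ hlim j
      have := ENNReal.Tendsto.const_mul (a := C) h0 (Or.inr hC)
      simpa using this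
    refine tendsto_of_tendsto_of_tendsto_of_le_of_le tendsto_const_nhds hS
      (fun n => zero_le) (fun n => ?_)
    calc (∑' i, k i * matPow P n i j) ≤ ∑' i, C * matPow P n i j :=
          ENNReal.tsum_le_tsum (fun i => mul_le_mul_left (hk i) _)
      _ = C * ∑' i, matPow P n i j := ENNReal.tsum_mul_left
  refine ⟨key, ?_⟩
  intro lam hb hinv j
  have h := key lam hb j
  have heq : ∀ n, lam j = ∑' i, lam i * matPow P n i j := fun n =>
    invariant_matPow P lam hinv n j
  have : lam j ≤ 0 := ge_of_tendsto h (Eventually.of_forall (fun n => (heq n).le))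
  exact le_antisymm this zero_le
end

section
/- Let P = (p_{ij})_{i,j∈ℕ} be a matrix with nonnegative entries such that there is n₀ with Σ_i (P^n)_{ij} < ∞ for every j and every n ≥ n₀. Suppose that for one index j₀ one has Σ_i (P^n)_{i j₀} → 0 as n → ∞, and that p_{i j₀} > 0 for every i. Then Σ_i (P^n)_{ij} → 0 as n → ∞ for every index j. -/
open Filter Topology ENNReal

/-- Theorem T05: Let `P` be a nonnegative matrix whose powers have finite column
sums for `n ≥ n₀`. If `∑_i (Pⁿ)_{i j₀} → 0` for one index `j₀` with `p_{i j₀} > 0` for every `i`,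
then `∑_i (Pⁿ)_{ij} → 0` for every index `j`. -/
theorem one_column_decay_implies_all
    (P : ℕ → ℕ → ℝ≥0∞)
    (n₀ : ℕ)
    (hfin : ∀ n, n₀ ≤ n → ∀ j, ∑' i, matPow P n i j ≠ ⊤)
    (j₀ : ℕ)
    (hj₀ : Tendsto (fun n => ∑' i, matPow P n i j₀) atTop (𝓝 0))
    (hpos : ∀ i, 0 < P i j₀) :
    ∀ j, Tendsto (fun n => ∑' i, matPow P n i j) atTop (𝓝 0) := by
  intro j
  have hb0 : P j j₀ ≠ 0 := (hpos j).ne'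
  -- key inequality: S_n(j) * P j j₀ ≤ S_{n+1}(j₀)
  have key : ∀ n, (∑' i, matPow P n i j) * P j j₀ ≤ ∑' i, matPow P (n + 1) i j₀ := by
    intro n
    have h1 : (∑' i, matPow P (n + 1) i j₀)
        = ∑' k, (∑' i, matPow P n i k) * P k j₀ := by
      simp only [matPow]
      rw [ENNReal.tsum_comm]
      exact tsum_congr fun k => ENNReal.tsum_mul_right
    rw [h1]
    exact ENNReal.le_tsum j
  -- bound: S_n(j) ≤ S_{n+1}(j₀) / P j j₀ eventually
  have hle : ∀ᶠ n in atTop, (∑' i, matPow P n i j)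
      ≤ (∑' i, matPow P (n + 1) i j₀) / P j j₀ := by
    filter_upwards [eventually_ge_atTop n₀] with n hn
    have hct : (∑' i, matPow P (n + 1) i j₀) ≠ ⊤ := hfin (n + 1) (le_trans hn (Nat.le_succ n)) j₀
    rw [ENNReal.le_div_iff_mul_le (Or.inl hb0) (Or.inr hct)]
    exact key n
  -- the bound tends to 0
  have hbnd : Tendsto (fun n => (∑' i, matPow P (n + 1) i j₀) / P j j₀) atTop (𝓝 0) := by
    have h1 : Tendsto (fun n => ∑' i, matPow P (n + 1) i j₀) atTop (𝓝 0) :=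
      hj₀.comp (tendsto_add_atTop_nat 1)
    have := ENNReal.Tendsto.mul_const (b := (P j j₀)⁻¹) h1
      (Or.inr (ENNReal.inv_ne_top.mpr hb0))
    simpa [div_eq_mul_inv] using this
  have h0 : Tendsto (fun _ : ℕ => (0 : ℝ≥0∞)) atTop (𝓝 0) := tendsto_const_nhds
  exact tendsto_of_tendsto_of_tendsto_of_le_of_le' h0 hbnd
    (Eventually.of_forall fun n => zero_le) hle
end

section
/- Let P = (p_{ij})_{i,j∈ℕ} be a double semi-stochastic matrix, i.e. p_{ij} ≥ 0, Σ_j p_{ij} ≤ 1 for every i, Σ_i p_{ij} ≤ 1 for every j, and suppose λ*(j) = lim_{n→∞} Σ_i (P^n)_{ij} = 0 for every j. If L is a nonnegative L∞-measure (L(i) ≥ 0, sup_i L(i) < ∞) satisfying L ≤ LP coordinate-wise, i.e. L(j) ≤ Σ_i L(i) p_{ij} for every j, then L = 0. -/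
open Filter Topology ENNReal

/-- For a double semi-stochastic matrix `P` with
`λ*(j) = lim_n ∑_i (Pⁿ)_{ij} = 0` for every `j`, any nonnegative `L∞`-measure `L` with
`L ≤ LP` coordinate-wise must vanish. -/
theorem subinvariant_Linfty_measure_zero
    (P : ℕ → ℕ → ℝ≥0∞)
    (hrow : ∀ i, ∑' j, P i j ≤ 1)
    (hcol : ∀ j, ∑' i, P i j ≤ 1)
    (hzero : ∀ j, Tendsto (fun n => ∑' i, matPow P n i j) atTop (𝓝 0))
    (L : ℕ → ℝ≥0∞) (C : ℝ≥0∞) (hC : C ≠ ⊤) (hLC : ∀ i, L i ≤ C)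
    (hLP : ∀ j, L j ≤ ∑' i, L i * P i j) :
    ∀ j, L j = 0 := by
  have key : ∀ n j, L j ≤ ∑' i, L i * matPow P n i j := by
    intro n
    induction n with
    | zero =>
      intro j
      have : (∑' i, L i * matPow P 0 i j) = L j := by
        simp only [matPow]
        rw [tsum_eq_single j]
        · simp
        · intro i hi; simp [hi]
      rw [this]
    | succ n ih =>
      intro j
      calc L j ≤ ∑' i, L i * P i j := hLP j
        _ ≤ ∑' i, (∑' k, L k * matPow P n k i) * P i j := by
            apply ENNReal.tsum_le_tsum
            intro i
            exact mul_le_mul_left (ih i) _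
        _ = ∑' k, L k * matPow P (n+1) k j := by
            simp only [matPow]
            rw [tsum_congr (fun i =>
              (ENNReal.tsum_mul_right (f := fun k => L k * matPow P n k i)).symm),
              ENNReal.tsum_comm]
            congr 1; ext k
            rw [← ENNReal.tsum_mul_left]
            congr 1; ext i
            rw [mul_assoc]
  intro j
  have hle : ∀ n, L j ≤ C * ∑' i, matPow P n i j := by
    intro n
    calc L j ≤ ∑' i, L i * matPow P n i j := key n j
      _ ≤ ∑' i, C * matPow P n i j :=
          ENNReal.tsum_le_tsum (fun i => mul_le_mul_left (hLC i) _)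
      _ = C * ∑' i, matPow P n i j := ENNReal.tsum_mul_left
  have htend : Tendsto (fun n => C * ∑' i, matPow P n i j) atTop (𝓝 0) := by
    have := ENNReal.Tendsto.const_mul (hzero j) (Or.inr hC)
    simpa using this
  have := ge_of_tendsto' htend hle
  exact le_antisymm this zero_le
end
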